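/- In every 2-swap game with only strategic agents in which the two types have the same number x ≥ 2 of agents (so n = 2x), every equilibrium assignment v satisfies SW(v*) ≤ 4·SW(v) for every assignment v*. In other words, the social price of anarchy of 2-swap games with only strategic agents and equal type sizes is at most 4. -/

import Mathlib

open Finset

namespace SwapGame

/-- Build a simple graph from a (not necessarily symmetric) boolean relation
by symmetrizing it and removing loops. -/
def mkGraph {V : Type*} (r : V → V → Bool) : SimpleGraph V where
  Adj a b := a ≠ b ∧ (r a b ∨ r b a)
  symm := ⟨by intro a b h; exact ⟨Ne.symm h.1, Or.symm h.2⟩⟩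
  loopless := ⟨by intro a h; exact h.1 rfl⟩

instance mkGraph.instDecidableRel {V : Type*} [DecidableEq V] (r : V → V → Bool) :
    DecidableRel (mkGraph r).Adj :=
  fun a b => inferInstanceAs (Decidable (a ≠ b ∧ (r a b ∨ r b a)))

variable {A V K : Type*} [Fintype V] [DecidableEq A] [DecidableEq V] [DecidableEq K]

/-- The assignment obtained from `σ` by swapping the locations of agents `i` and `j`. -/
def swapA (σ : A ≃ V) (i j : A) : A ≃ V := (Equiv.swap i j).trans σ

/-- The utility of agent `i` under assignment `σ`: the fraction of the neighbors of the
node of `i` that are occupied by agents of the same type (friends of `i`). -/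
def util (G : SimpleGraph V) [DecidableRel G.Adj] (c : A → K) (σ : A ≃ V) (i : A) : ℚ :=
  (((G.neighborFinset (σ i)).filter (fun w => c (σ.symm w) = c i)).card : ℚ) /
    ((G.neighborFinset (σ i)).card : ℚ)

/-- Agents `i` and `j` both strictly increase their utility by swapping their locations. -/
def improving (G : SimpleGraph V) [DecidableRel G.Adj] (c : A → K) (σ : A ≃ V)
    (i j : A) : Prop :=
  util G c σ i < util G c (swapA σ i j) i ∧ util G c σ j < util G c (swapA σ i j) j

/-- An assignment is an equilibrium if no pair of agents can both strictly increase
their utility by swapping positions. -/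
def isEquilibrium (G : SimpleGraph V) [DecidableRel G.Adj] (c : A → K) (σ : A ≃ V) : Prop :=
  ¬ ∃ i j : A, improving G c σ i j

/-- The social welfare of an assignment: the sum of the utilities of all agents. -/
def SW [Fintype A] (G : SimpleGraph V) [DecidableRel G.Adj] (c : A → K) (σ : A ≃ V) : ℚ :=
  ∑ i : A, util G c σ i

/-- Agent `i` is exposed: at least one neighbor is occupied by an agent of another type. -/
def exposed (G : SimpleGraph V) [DecidableRel G.Adj] (c : A → K) (σ : A ≃ V) (i : A) : Prop :=
  ((G.neighborFinset (σ i)).filter (fun w => c (σ.symm w) ≠ c i)).Nonempty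

instance exposed.instDecidable (G : SimpleGraph V) [DecidableRel G.Adj] (c : A → K)
    (σ : A ≃ V) : DecidablePred (exposed G c σ) :=
  fun _ => inferInstanceAs (Decidable (Finset.Nonempty _))

/-- The degree of integration of an assignment: the number of exposed agents. -/
def DI [Fintype A] (G : SimpleGraph V) [DecidableRel G.Adj] (c : A → K) (σ : A ≃ V) : ℕ :=
  (univ.filter (fun i : A => exposed G c σ i)).card

end SwapGame

namespace SwapGame

section PoAProof

variable {A V : Type} [Fintype A] [DecidableEq A] [Fintype V] [DecidableEq V]
variable (G : SimpleGraph V) [DecidableRel G.Adj] (c : A → Fin 2) (σ : A ≃ V)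

/-- The number of opposite-colored neighbors of agent `i`. -/
def cross (i : A) : ℕ :=
  ((G.neighborFinset (σ i)).filter (fun w => c (σ.symm w) ≠ c i)).card

private lemma fin2_ne : ∀ a b y : Fin 2, a ≠ b → (y = a ↔ y ≠ b) := by decide

private lemma fin2_ne0 : ∀ a : Fin 2, (¬ a = 0) ↔ a = 1 := by decide

lemma cross_le_degree (i : A) : cross G c σ i ≤ G.degree (σ i) := by
  rw [cross, ← SimpleGraph.card_neighborFinset_eq_degree]
  exact Finset.card_filter_le _ _

lemma util_nonneg (i : A) : 0 ≤ util G c σ i :=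
  div_nonneg (Nat.cast_nonneg _) (Nat.cast_nonneg _)

lemma util_le_one (i : A) : util G c σ i ≤ 1 := by
  rcases Nat.eq_zero_or_pos (G.neighborFinset (σ i)).card with h | h
  · rw [util, h]; simp
  · rw [util, div_le_one (by exact_mod_cast h)]
    exact_mod_cast Finset.card_filter_le _ _

lemma util_eq_one_sub (i : A) (hd : 0 < G.degree (σ i)) :
    util G c σ i = 1 - (cross G c σ i : ℚ) / (G.degree (σ i) : ℚ) := by
  have hsum : ((G.neighborFinset (σ i)).filter (fun w => c (σ.symm w) = c i)).card
      + cross G c σ i = G.degree (σ i) := by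
    rw [cross, ← SimpleGraph.card_neighborFinset_eq_degree]
    exact Finset.card_filter_add_card_filter_not _
  have hd' : ((G.degree (σ i) : ℚ)) ≠ 0 := by positivity
  have hc : (((G.neighborFinset (σ i)).filter (fun w => c (σ.symm w) = c i)).card : ℚ)
      = (G.degree (σ i) : ℚ) - (cross G c σ i : ℚ) := by
    have : ((((G.neighborFinset (σ i)).filter (fun w => c (σ.symm w) = c i)).card : ℚ)
        + (cross G c σ i : ℚ)) = (G.degree (σ i) : ℚ) := by exact_mod_cast hsum
    linarith
  rw [util, SimpleGraph.card_neighborFinset_eq_degree, hc, sub_div, div_self hd']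

lemma pair_le_SW (i j : A) (hij : i ≠ j) :
    util G c σ i + util G c σ j ≤ SW G c σ := by
  have h := Finset.sum_le_sum_of_subset_of_nonneg (Finset.subset_univ ({i, j} : Finset A))
    (fun k _ _ => util_nonneg G c σ k)
  rwa [Finset.sum_pair hij] at h

lemma util_swap (i j : A) (hc : c i ≠ c j) (hd : 0 < G.degree (σ j)) :
    util G c (swapA σ i j) i
      = ((cross G c σ j : ℚ) - if G.Adj (σ i) (σ j) then 1 else 0) / (G.degree (σ j) : ℚ) := by
  have happ : (swapA σ i j) i = σ j := by simp [swapA]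
  have hsymmw : ∀ w : V, (swapA σ i j).symm w = Equiv.swap i j (σ.symm w) := by
    intro w; simp [swapA]
  have hset : (G.neighborFinset (σ j)).filter (fun w => c ((swapA σ i j).symm w) = c i)
      = ((G.neighborFinset (σ j)).filter (fun w => c (σ.symm w) ≠ c j)).erase (σ i) := by
    ext w
    simp only [Finset.mem_filter, Finset.mem_erase, SimpleGraph.mem_neighborFinset, hsymmw]
    constructor
    · rintro ⟨hadj, hcw⟩
      have hwj : σ.symm w ≠ j := by
        intro h
        exact (G.ne_of_adj hadj) (by rw [← h, Equiv.apply_symm_apply])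
      by_cases hwi : σ.symm w = i
      · rw [hwi, Equiv.swap_apply_left] at hcw
        exact absurd hcw hc.symm
      · rw [Equiv.swap_apply_of_ne_of_ne hwi hwj] at hcw
        refine ⟨fun h => hwi (by rw [h, Equiv.symm_apply_apply]), hadj,
          (fin2_ne _ _ _ hc).mp hcw⟩
    · rintro ⟨hwne, hadj, hcw⟩
      have hwj : σ.symm w ≠ j := by
        intro h
        exact (G.ne_of_adj hadj) (by rw [← h, Equiv.apply_symm_apply])
      have hwi : σ.symm w ≠ i := fun h => hwne (by rw [← h, Equiv.apply_symm_apply])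
      rw [Equiv.swap_apply_of_ne_of_ne hwi hwj]
      exact ⟨hadj, (fin2_ne _ _ _ hc).mpr hcw⟩
  have hmem : σ i ∈ (G.neighborFinset (σ j)).filter (fun w => c (σ.symm w) ≠ c j)
      ↔ G.Adj (σ i) (σ j) := by
    simp only [Finset.mem_filter, SimpleGraph.mem_neighborFinset, Equiv.symm_apply_apply]
    exact ⟨fun h => h.1.symm, fun h => ⟨h.symm, hc⟩⟩
  rw [util, happ, hset]
  by_cases hA : G.Adj (σ i) (σ j)
  · have hin := hmem.mpr hA
    have h1 : 1 ≤ ((G.neighborFinset (σ j)).filter (fun w => c (σ.symm w) ≠ c j)).card :=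
      Finset.card_pos.mpr ⟨_, hin⟩
    rw [Finset.card_erase_of_mem hin, if_pos hA, SimpleGraph.card_neighborFinset_eq_degree]
    rw [Nat.cast_sub h1, Nat.cast_one]
    rfl
  · rw [Finset.erase_eq_of_notMem (fun h => hA (hmem.mp h)), if_neg hA,
      SimpleGraph.card_neighborFinset_eq_degree, sub_zero]
    rfl

lemma eq_or (heq : isEquilibrium G c σ) (i j : A) :
    util G c (swapA σ i j) i ≤ util G c σ i ∨ util G c (swapA σ i j) j ≤ util G c σ j := by
  have h : ¬ improving G c σ i j := fun h => heq ⟨i, j, h⟩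
  rw [improving, not_and_or, not_lt, not_lt] at h
  exact h

lemma swapA_comm (i j : A) : swapA σ i j = swapA σ j i := by
  rw [swapA, swapA, Equiv.swap_comm]

lemma pair_bound (heq : isEquilibrium G c σ) (i j : A) (hc : c i ≠ c j)
    (hdi : 0 < G.degree (σ i)) (hdj : 0 < G.degree (σ j)) :
    1 - (if G.Adj (σ i) (σ j) then 1/(G.degree (σ i) : ℚ) + 1/(G.degree (σ j) : ℚ) else 0)
      ≤ util G c σ i + util G c σ j := by
  have hor := eq_or G c σ heq i j
  have e1 := util_swap G c σ i j hc hdj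
  have e2 := util_swap G c σ j i hc.symm hdi
  rw [swapA_comm σ j i] at e2
  have hu_i := util_eq_one_sub G c σ i hdi
  have hu_j := util_eq_one_sub G c σ j hdj
  have hdi' : (0:ℚ) < (G.degree (σ i) : ℚ) := by exact_mod_cast hdi
  have hdj' : (0:ℚ) < (G.degree (σ j) : ℚ) := by exact_mod_cast hdj
  have hposi : (0:ℚ) ≤ 1/(G.degree (σ i) : ℚ) := by positivity
  have hposj : (0:ℚ) ≤ 1/(G.degree (σ j) : ℚ) := by positivity
  by_cases hA : G.Adj (σ i) (σ j)
  · rw [if_pos hA] at e1 ⊢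
    rw [if_pos hA.symm] at e2
    rw [sub_div] at e1 e2
    have hcrj : (cross G c σ j : ℚ) / (G.degree (σ j) : ℚ) = 1 - util G c σ j := by linarith
    have hcri : (cross G c σ i : ℚ) / (G.degree (σ i) : ℚ) = 1 - util G c σ i := by linarith
    rcases hor with h | h
    · rw [e1, hcrj] at h
      linarith
    · rw [e2, hcri] at h
      linarith
  · rw [if_neg hA] at e1 ⊢
    rw [if_neg (fun h => hA h.symm)] at e2
    rw [sub_zero] at e1 e2 ⊢
    have hcrj : (cross G c σ j : ℚ) / (G.degree (σ j) : ℚ) = 1 - util G c σ j := by linarith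
    have hcri : (cross G c σ i : ℚ) / (G.degree (σ i) : ℚ) = 1 - util G c σ i := by linarith
    rcases hor with h | h
    · rw [e1, hcrj] at h; linarith
    · rw [e2, hcri] at h; linarith

lemma cross_card (i : A) :
    (Finset.univ.filter (fun j : A => c j ≠ c i ∧ G.Adj (σ i) (σ j))).card
      = cross G c σ i := by
  rw [cross]
  apply Finset.card_bij (fun j _ => σ j)
  · intro a ha
    simp only [Finset.mem_filter, Finset.mem_univ, true_and] at ha
    simp only [Finset.mem_filter, SimpleGraph.mem_neighborFinset, Equiv.symm_apply_apply]
    exact ⟨ha.2, ha.1⟩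
  · intro a _ b _ h
    exact σ.injective h
  · intro w hw
    simp only [Finset.mem_filter, SimpleGraph.mem_neighborFinset] at hw
    refine ⟨σ.symm w, ?_, by simp⟩
    simp only [Finset.mem_filter, Finset.mem_univ, true_and, Equiv.apply_symm_apply]
    exact ⟨hw.2, hw.1⟩

lemma deg_pos (hconn : G.Connected) (hV : 1 < Fintype.card V) (v : V) :
    0 < G.degree v := by
  rw [SimpleGraph.degree_pos_iff_exists_adj]
  obtain ⟨u, hu⟩ := Fintype.exists_ne_of_one_lt_card hV v
  have h := (SimpleGraph.reachable_iff_reflTransGen (G := G) v u).mp (hconn.preconnected v u)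
  rcases h.cases_head with heq | ⟨w, hadj, _⟩
  · exact absurd heq.symm hu
  · exact ⟨w, hadj⟩

lemma two_le_cross (i j1 j2 : A) (hj : j1 ≠ j2) (hc1 : c j1 ≠ c i) (hc2 : c j2 ≠ c i)
    (hA1 : G.Adj (σ i) (σ j1)) (hA2 : G.Adj (σ i) (σ j2)) : 2 ≤ cross G c σ i := by
  have hsub : ({σ j1, σ j2} : Finset V)
      ⊆ (G.neighborFinset (σ i)).filter (fun w => c (σ.symm w) ≠ c i) := by
    intro w hw
    simp only [Finset.mem_insert, Finset.mem_singleton] at hw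
    rcases hw with rfl | rfl <;>
      simp only [Finset.mem_filter, SimpleGraph.mem_neighborFinset, Equiv.symm_apply_apply] <;>
      exact ⟨by assumption, by assumption⟩
  calc 2 = ({σ j1, σ j2} : Finset V).card := (Finset.card_pair (fun h => hj (σ.injective h))).symm
    _ ≤ _ := Finset.card_le_card hsub

lemma x2_sub (heq : isEquilibrium G c σ) (hV4 : Fintype.card V = 4)
    (a1 a2 b1 b2 : A) (ha : a1 ≠ a2) (hb : b1 ≠ b2)
    (hc11 : c a1 ≠ c b1) (hc12 : c a1 ≠ c b2) (hc21 : c a2 ≠ c b1) (hc22 : c a2 ≠ c b2)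
    (hA11 : G.Adj (σ a1) (σ b1)) (hA12 : G.Adj (σ a1) (σ b2))
    (hA21 : G.Adj (σ a2) (σ b1)) (hA22 : G.Adj (σ a2) (σ b2))
    (hu : util G c σ a1 < 1/3) : 1 ≤ SW G c σ := by
  have hca1 : 2 ≤ cross G c σ a1 := two_le_cross G c σ a1 b1 b2 hb hc11.symm hc12.symm hA11 hA12
  have hcb1 : 2 ≤ cross G c σ b1 := two_le_cross G c σ b1 a1 a2 ha hc11 hc21 hA11.symm hA21.symm
  have hcb2 : 2 ≤ cross G c σ b2 := two_le_cross G c σ b2 a1 a2 ha hc12 hc22 hA12.symm hA22.symm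
  have hda1 : 0 < G.degree (σ a1) := lt_of_lt_of_le (by omega) (cross_le_degree G c σ a1)
  have hda1' : (0:ℚ) < (G.degree (σ a1) : ℚ) := by exact_mod_cast hda1
  have hlt3 : G.degree (σ a1) ≤ 3 := by
    have := G.degree_lt_card_verts (σ a1); omega
  -- u_{a1} has no same-color neighbors
  have hua1 : cross G c σ a1 = G.degree (σ a1) := by
    by_contra hne
    have h1 : cross G c σ a1 + 1 ≤ G.degree (σ a1) :=
      lt_of_le_of_ne (cross_le_degree G c σ a1) hne
    have hcr : ((cross G c σ a1 : ℚ)) + 1 ≤ (G.degree (σ a1) : ℚ) := by exact_mod_cast h1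
    have hd3 : ((G.degree (σ a1) : ℚ)) ≤ 3 := by exact_mod_cast hlt3
    rw [util_eq_one_sub G c σ a1 hda1] at hu
    have h2 : 2/3 < (cross G c σ a1 : ℚ) / (G.degree (σ a1) : ℚ) := by linarith
    rw [lt_div_iff₀ hda1'] at h2
    linarith
  have hua1' : util G c σ a1 = 0 := by
    rw [util_eq_one_sub G c σ a1 hda1, hua1, div_self (ne_of_gt hda1')]
    ring
  have main : ∀ b : A, c a1 ≠ c b → G.Adj (σ a1) (σ b) → 2 ≤ cross G c σ b →
      1/2 ≤ util G c σ b := by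
    intro b hcb hAb hcrb
    have hdb : 0 < G.degree (σ b) := lt_of_lt_of_le (by omega) (cross_le_degree G c σ b)
    have hdb' : (0:ℚ) < (G.degree (σ b) : ℚ) := by exact_mod_cast hdb
    have hor := eq_or G c σ heq a1 b
    have e1 := util_swap G c σ a1 b hcb hdb
    have e2 := util_swap G c σ b a1 hcb.symm hda1
    rw [swapA_comm σ b a1] at e2
    rw [if_pos hAb] at e1
    rw [if_pos hAb.symm] at e2
    have hcrb' : (2:ℚ) ≤ (cross G c σ b : ℚ) := by exact_mod_cast hcrb
    rcases hor with h | h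
    · exfalso
      rw [e1, hua1'] at h
      have hpos : (0:ℚ) < ((cross G c σ b : ℚ) - 1) / (G.degree (σ b) : ℚ) :=
        div_pos (by linarith) hdb'
      linarith
    · rw [e2, hua1] at h
      have hd2 : (2:ℚ) ≤ (G.degree (σ a1) : ℚ) := by
        have : 2 ≤ G.degree (σ a1) := hua1 ▸ hca1
        exact_mod_cast this
      have hhalf : (1:ℚ)/2 ≤ ((G.degree (σ a1) : ℚ) - 1) / (G.degree (σ a1) : ℚ) := by
        rw [div_le_div_iff₀ (by norm_num) hda1']
        linarith
      linarith
  have h1 := main b1 hc11 hA11 hcb1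
  have h2 := main b2 hc12 hA12 hcb2
  have := pair_le_SW G c σ b1 b2 hb
  linarith

lemma SW_ge_one_x2 (hconn : G.Connected)
    (h0 : (Finset.univ.filter (fun i : A => c i = 0)).card = 2)
    (h1 : (Finset.univ.filter (fun i : A => c i = 1)).card = 2)
    (heq : isEquilibrium G c σ) : 1 ≤ SW G c σ := by
  obtain ⟨i1, i2, hi, hR⟩ := Finset.card_eq_two.mp h0
  obtain ⟨j1, j2, hj, hB⟩ := Finset.card_eq_two.mp h1
  have hmemR : ∀ k : A, k ∈ ({i1, i2} : Finset A) → c k = 0 := by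
    intro k hk
    have : k ∈ Finset.univ.filter (fun i : A => c i = 0) := hR ▸ hk
    exact (Finset.mem_filter.mp this).2
  have hmemB : ∀ k : A, k ∈ ({j1, j2} : Finset A) → c k = 1 := by
    intro k hk
    have : k ∈ Finset.univ.filter (fun i : A => c i = 1) := hB ▸ hk
    exact (Finset.mem_filter.mp this).2
  have hci1 : c i1 = 0 := hmemR i1 (by simp)
  have hci2 : c i2 = 0 := hmemR i2 (by simp)
  have hcj1 : c j1 = 1 := hmemB j1 (by simp)
  have hcj2 : c j2 = 1 := hmemB j2 (by simp)
  have hc11 : c i1 ≠ c j1 := by rw [hci1, hcj1]; decide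
  have hc12 : c i1 ≠ c j2 := by rw [hci1, hcj2]; decide
  have hc21 : c i2 ≠ c j1 := by rw [hci2, hcj1]; decide
  have hc22 : c i2 ≠ c j2 := by rw [hci2, hcj2]; decide
  have hcardA : Fintype.card A = 4 := by
    have hpart := Finset.card_filter_add_card_filter_not
      (s := (Finset.univ : Finset A)) (p := fun i => c i = 0)
    have hBeq : Finset.univ.filter (fun i : A => ¬ c i = 0)
        = Finset.univ.filter (fun i : A => c i = 1) := by
      apply Finset.filter_congr
      intro a _
      simp only [fin2_ne0 (c a)]
    rw [hBeq, h0, h1, Finset.card_univ] at hpart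
    omega
  have hV4 : Fintype.card V = 4 := by rw [← Fintype.card_congr σ]; exact hcardA
  have hV1 : 1 < Fintype.card V := by omega
  have hd : ∀ k : A, 0 < G.degree (σ k) := fun k => deg_pos G hconn hV1 (σ k)
  have hnonadj : ∀ i j : A, c i ≠ c j → ¬ G.Adj (σ i) (σ j) → 1 ≤ SW G c σ := by
    intro i j hc hna
    have hpb := pair_bound G c σ heq i j hc (hd i) (hd j)
    rw [if_neg hna, sub_zero] at hpb
    have hij : i ≠ j := fun h => hc (h ▸ rfl)
    have := pair_le_SW G c σ i j hij
    linarith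
  by_cases hA11 : G.Adj (σ i1) (σ j1)
  swap
  · exact hnonadj i1 j1 hc11 hA11
  by_cases hA12 : G.Adj (σ i1) (σ j2)
  swap
  · exact hnonadj i1 j2 hc12 hA12
  by_cases hA21 : G.Adj (σ i2) (σ j1)
  swap
  · exact hnonadj i2 j1 hc21 hA21
  by_cases hA22 : G.Adj (σ i2) (σ j2)
  swap
  · exact hnonadj i2 j2 hc22 hA22
  by_cases hu1 : util G c σ i1 < 1/3
  · exact x2_sub G c σ heq hV4 i1 i2 j1 j2 hi hj hc11 hc12 hc21 hc22 hA11 hA12 hA21 hA22 hu1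
  by_cases hu2 : util G c σ i2 < 1/3
  · exact x2_sub G c σ heq hV4 i2 i1 j1 j2 hi.symm hj hc21 hc22 hc11 hc12 hA21 hA22 hA11 hA12 hu2
  by_cases hu3 : util G c σ j1 < 1/3
  · exact x2_sub G c σ heq hV4 j1 j2 i1 i2 hj hi hc11.symm hc21.symm hc12.symm hc22.symm
      hA11.symm hA21.symm hA12.symm hA22.symm hu3
  by_cases hu4 : util G c σ j2 < 1/3
  · exact x2_sub G c σ heq hV4 j2 j1 i1 i2 hj.symm hi hc12.symm hc22.symm hc11.symm hc21.symm
      hA12.symm hA22.symm hA11.symm hA21.symm hu4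
  push_neg at hu1 hu2 hu3 hu4
  have hij11 : i1 ≠ j1 := fun h => hc11 (h ▸ rfl)
  have hij12 : i1 ≠ j2 := fun h => hc12 (h ▸ rfl)
  have hij21 : i2 ≠ j1 := fun h => hc21 (h ▸ rfl)
  have hij22 : i2 ≠ j2 := fun h => hc22 (h ▸ rfl)
  have hsum : ∑ k ∈ ({i1, i2, j1, j2} : Finset A), util G c σ k
      = util G c σ i1 + util G c σ i2 + util G c σ j1 + util G c σ j2 := by
    rw [Finset.sum_insert (by simp [hi, hij11, hij12]),
      Finset.sum_insert (by simp [hij21, hij22]), Finset.sum_pair hj]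
    ring
  have hle := Finset.sum_le_sum_of_subset_of_nonneg
    (Finset.subset_univ ({i1, i2, j1, j2} : Finset A)) (fun k _ _ => util_nonneg G c σ k)
  rw [hsum] at hle
  have : SW G c σ = ∑ k : A, util G c σ k := rfl
  linarith [hle]

lemma equilibrium_SW_lb (hconn : G.Connected) {x : ℕ} (hx : 2 ≤ x)
    (h0 : (Finset.univ.filter (fun i : A => c i = 0)).card = x)
    (h1 : (Finset.univ.filter (fun i : A => c i = 1)).card = x)
    (heq : isEquilibrium G c σ) :
    (x:ℚ)^2 - 2*(x:ℚ) + SW G c σ ≤ (x:ℚ) * SW G c σ := by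
  classical
  set R := Finset.univ.filter (fun i : A => c i = 0) with hRdef
  set B := Finset.univ.filter (fun i : A => c i = 1) with hBdef
  set u := fun i : A => util G c σ i with hudef
  set d := fun i : A => ((G.degree (σ i) : ℚ)) with hddef
  have hBeq : Finset.univ.filter (fun i : A => ¬ c i = 0) = B := by
    rw [hBdef]
    apply Finset.filter_congr
    intro a _
    simp only [fin2_ne0 (c a)]
  have hcardA : Fintype.card A = 2 * x := by
    have hpart := Finset.card_filter_add_card_filter_not
      (s := (Finset.univ : Finset A)) (p := fun i => c i = 0)
    rw [hBeq] at hpart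
    rw [h0, h1, Finset.card_univ] at hpart
    omega
  have hV1 : 1 < Fintype.card V := by
    rw [← Fintype.card_congr σ]; omega
  have hd : ∀ k : A, 0 < G.degree (σ k) := fun k => deg_pos G hconn hV1 (σ k)
  have hciR : ∀ i ∈ R, c i = 0 := fun i hi => (Finset.mem_filter.mp hi).2
  have hcjB : ∀ j ∈ B, c j = 1 := fun j hj => (Finset.mem_filter.mp hj).2
  have hT1 : ∀ i ∈ R, ∑ j ∈ B, (if G.Adj (σ i) (σ j) then 1 / d i else 0) = 1 - u i := by
    intro i hi
    have hci : c i = 0 := hciR i hi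
    have hBfilter : B.filter (fun j => G.Adj (σ i) (σ j))
        = Finset.univ.filter (fun j : A => c j ≠ c i ∧ G.Adj (σ i) (σ j)) := by
      ext a
      simp only [hBdef, Finset.mem_filter, Finset.mem_univ, true_and]
      constructor
      · rintro ⟨ha1, ha2⟩
        refine ⟨?_, ha2⟩
        rw [ha1, hci]; decide
      · rintro ⟨ha1, ha2⟩
        rw [hci] at ha1
        exact ⟨(fin2_ne0 (c a)).mp ha1, ha2⟩
    rw [← Finset.sum_filter, Finset.sum_const, hBfilter, cross_card, nsmul_eq_mul,
      mul_one_div]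
    simp only [hudef, hddef]
    rw [util_eq_one_sub G c σ i (hd i)]
    ring
  have hT2 : ∀ j ∈ B, ∑ i ∈ R, (if G.Adj (σ i) (σ j) then 1 / d j else 0) = 1 - u j := by
    intro j hj
    have hcj : c j = 1 := hcjB j hj
    have hRfilter : R.filter (fun i => G.Adj (σ i) (σ j))
        = Finset.univ.filter (fun i : A => c i ≠ c j ∧ G.Adj (σ j) (σ i)) := by
      ext a
      simp only [hRdef, Finset.mem_filter, Finset.mem_univ, true_and]
      constructor
      · rintro ⟨ha1, ha2⟩
        refine ⟨?_, ha2.symm⟩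
        rw [ha1, hcj]; decide
      · rintro ⟨ha1, ha2⟩
        rw [hcj] at ha1
        refine ⟨?_, ha2.symm⟩
        revert ha1
        have h2 : ∀ b : Fin 2, b ≠ 1 → b = 0 := by decide
        exact h2 (c a)
    rw [← Finset.sum_filter, Finset.sum_const, hRfilter, cross_card, nsmul_eq_mul,
      mul_one_div]
    simp only [hudef, hddef]
    rw [util_eq_one_sub G c σ j (hd j)]
    ring
  have hpair : ∀ i ∈ R, ∀ j ∈ B,
      1 - ((if G.Adj (σ i) (σ j) then 1 / d i else 0)
        + (if G.Adj (σ i) (σ j) then 1 / d j else 0)) ≤ u i + u j := by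
    intro i hi j hj
    have hc : c i ≠ c j := by rw [hciR i hi, hcjB j hj]; decide
    have hpb := pair_bound G c σ heq i j hc (hd i) (hd j)
    rw [hddef]
    by_cases hA : G.Adj (σ i) (σ j)
    · rw [if_pos hA] at hpb
      rw [if_pos hA, if_pos hA]
      exact hpb
    · rw [if_neg hA] at hpb
      rw [if_neg hA, if_neg hA, add_zero]
      rw [sub_zero] at hpb
      simpa using hpb
  have hS := Finset.sum_le_sum (fun i (hi : i ∈ R) =>
    Finset.sum_le_sum (fun j (hj : j ∈ B) => hpair i hi j hj))
  have hRHS : ∑ i ∈ R, ∑ j ∈ B, (u i + u j)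
      = (x:ℚ) * (∑ i ∈ R, u i) + (x:ℚ) * (∑ j ∈ B, u j) := by
    simp only [Finset.sum_add_distrib, Finset.sum_const, h1, h0, nsmul_eq_mul,
      ← Finset.sum_mul, ← Finset.mul_sum]
    try ring
  have hLHS : ∑ i ∈ R, ∑ j ∈ B, (1 - ((if G.Adj (σ i) (σ j) then 1 / d i else 0)
        + (if G.Adj (σ i) (σ j) then 1 / d j else 0)))
      = (x:ℚ) * (x:ℚ) - (((x:ℚ) - ∑ i ∈ R, u i) + ((x:ℚ) - ∑ j ∈ B, u j)) := by
    have e0 : ∑ _i ∈ R, ∑ _j ∈ B, (1:ℚ) = (x:ℚ) * (x:ℚ) := by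
      simp only [Finset.sum_const, h1, h0, nsmul_eq_mul, mul_one]
    have e1 : ∑ i ∈ R, ∑ j ∈ B, (if G.Adj (σ i) (σ j) then 1 / d i else 0)
        = (x:ℚ) - ∑ i ∈ R, u i := by
      rw [Finset.sum_congr rfl hT1, Finset.sum_sub_distrib, Finset.sum_const, h0,
        nsmul_eq_mul, mul_one]
    have e2 : ∑ i ∈ R, ∑ j ∈ B, (if G.Adj (σ i) (σ j) then 1 / d j else 0)
        = (x:ℚ) - ∑ j ∈ B, u j := by
      rw [Finset.sum_comm, Finset.sum_congr rfl hT2, Finset.sum_sub_distrib,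
        Finset.sum_const, h1, nsmul_eq_mul, mul_one]
    simp only [Finset.sum_sub_distrib, Finset.sum_add_distrib]
    rw [e0, e1, e2]
  rw [hRHS, hLHS] at hS
  have hSW : SW G c σ = ∑ i ∈ R, u i + ∑ j ∈ B, u j := by
    have hps := Finset.sum_filter_add_sum_filter_not Finset.univ (fun i : A => c i = 0)
      (fun i => u i)
    rw [hBeq] at hps
    rw [SW, ← hps]
  rw [hSW]
  nlinarith [hS]


end PoAProof

end SwapGame

namespace SwapGame

/-- in every 2-swap game with only strategic agents in which the two types
have the same number `x ≥ 2` of agents (so `n = 2x`), every equilibrium assignment `v`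
satisfies `SW(v*) ≤ 4·SW(v)` for every assignment `v*`; i.e. the social price of anarchy
of 2-swap games with only strategic agents and equal type sizes is at most 4. -/
theorem poa_le_four_equal_types {A V : Type} [Fintype A] [DecidableEq A]
    [Fintype V] [DecidableEq V] (G : SimpleGraph V) [DecidableRel G.Adj]
    (hconn : G.Connected) (c : A → Fin 2) (x : ℕ) (hx : 2 ≤ x)
    (h0 : (univ.filter (fun i => c i = 0)).card = x)
    (h1 : (univ.filter (fun i => c i = 1)).card = x)
    (σ : A ≃ V) (heq : isEquilibrium G c σ) (σ' : A ≃ V) :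
    SW G c σ' ≤ 4 * SW G c σ := by
  have hcardA : Fintype.card A = 2 * x := by
    have hBeq : Finset.univ.filter (fun i : A => ¬ c i = 0)
        = Finset.univ.filter (fun i : A => c i = 1) := by
      apply Finset.filter_congr
      intro a _
      simp only [fin2_ne0 (c a)]
    have hpart := Finset.card_filter_add_card_filter_not
      (s := (Finset.univ : Finset A)) (p := fun i => c i = 0)
    rw [hBeq, h0, h1, Finset.card_univ] at hpart
    omega
  have hSW'le : SW G c σ' ≤ ((2 * x : ℕ) : ℚ) := by
    have hle : SW G c σ' ≤ ∑ _i : A, (1:ℚ) :=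
      Finset.sum_le_sum (fun i _ => util_le_one G c σ' i)
    rwa [Finset.sum_const, Finset.card_univ, hcardA, nsmul_eq_mul, mul_one] at hle
  have hSWnn : (0:ℚ) ≤ SW G c σ := Finset.sum_nonneg (fun i _ => util_nonneg G c σ i)
  push_cast at hSW'le
  rcases eq_or_lt_of_le hx with h2 | h3
  · rw [← h2] at h0 h1 hSW'le
    have hone := SW_ge_one_x2 G c σ hconn h0 h1 heq
    push_cast at hSW'le
    linarith
  · have hagg := equilibrium_SW_lb G c σ hconn hx h0 h1 heq
    have hx3 : (3:ℚ) ≤ (x:ℚ) := by exact_mod_cast (by omega : 3 ≤ x)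
    nlinarith [hagg, hSWnn, hSW'le, mul_nonneg hSWnn (by linarith : (0:ℚ) ≤ (x:ℚ) - 3),
      mul_nonneg (by positivity : (0:ℚ) ≤ (x:ℚ)) (by linarith : (0:ℚ) ≤ (x:ℚ) - 3)]

end SwapGame
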